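/- Let E be an n×n integer matrix with det E ≠ 0, let q ∈ ℚⁿ satisfy E(q₁,…,qₙ)ᵀ = (1,…,1)ᵀ, and let g₀ = (exp(2πi q₁),…,exp(2πi qₙ)) ∈ G_f. Then for every λ ∈ G_{f̃}, one has ⟨λ, g₀⟩_E = 1 if and only if Π_{j=1}^n λ_j = 1. Equivalently, the dual subgroup of the cyclic subgroup G_{f,0} = ⟨g₀⟩ ⊆ G_f equals G_{f̃} ∩ SL(n, ℂ) (viewing elements of G_{f̃} as diagonal matrices). -/
import Mathlib


open Complex Matrix

noncomputable section

/-- The group `G_f` of diagonal symmetries of the invertible polynomial with exponent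
matrix `E`, as a subgroup of the torus `(ℂˣ)ⁿ`. (The symmetry group `G_{f̃}` of the
Berglund–Hübsch transpose is then `Gf Eᵀ`.) -/
def Gf {n : ℕ} (E : Matrix (Fin n) (Fin n) ℤ) : Subgroup (Fin n → ℂˣ) where
  carrier := {μ | ∀ i, ∏ j, μ j ^ E i j = 1}
  one_mem' := by intro i; simp
  mul_mem' := by
    intro a b ha hb i
    simp only [Pi.mul_apply, mul_zpow, Finset.prod_mul_distrib, ha i, hb i, mul_one]
  inv_mem' := by
    intro a ha i
    simp only [Pi.inv_apply, _root_.inv_zpow, Finset.prod_inv_distrib, ha i, inv_one]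

/-- The exponential grading (monodromy) element `g₀ = (exp(2πi q₁), …, exp(2πi qₙ))`. -/
def gZero {n : ℕ} (q : Fin n → ℚ) : Fin n → ℂˣ :=
  fun j => Units.mk0 (Complex.exp (2 * (Real.pi : ℂ) * Complex.I * (q j : ℂ)))
    (Complex.exp_ne_zero _)

/-- `exp (2πi r) = 1` iff the rational number `r` is an integer. -/
lemma exp_rat_eq_one_iff (r : ℚ) :
    Complex.exp (2 * (Real.pi : ℂ) * Complex.I * (r : ℂ)) = 1 ↔ ∃ k : ℤ, r = k := by
  rw [Complex.exp_eq_one_iff]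
  have h2 : (2 * (Real.pi : ℂ) * Complex.I) ≠ 0 := by
    simp [Real.pi_ne_zero, Complex.I_ne_zero, two_ne_zero]
  constructor
  · rintro ⟨k, hk⟩
    refine ⟨k, ?_⟩
    have : (2 * (Real.pi : ℂ) * Complex.I) * (r : ℂ)
        = (2 * (Real.pi : ℂ) * Complex.I) * (k : ℂ) := by rw [hk]; ring
    have := mul_left_cancel₀ h2 this
    exact_mod_cast this
  · rintro ⟨k, rfl⟩
    exact ⟨k, by push_cast; ring⟩

/-- `zpow` of a sum of integers is a product. -/
lemma zpow_finset_sum {G : Type*} [CommGroup G] (x : G) {ι : Type*} (s : Finset ι)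
    (f : ι → ℤ) : x ^ (∑ i ∈ s, f i) = ∏ i ∈ s, x ^ f i := by
  induction s using Finset.cons_induction with
  | empty => simp
  | cons a s ha ih => rw [Finset.sum_cons, Finset.prod_cons, _root_.zpow_add, ih]

/-- A product of integer powers of exponentials of rationals. -/
lemma prod_exp_zpow {n : ℕ} (c : Fin n → ℤ) (r : Fin n → ℚ) :
    ∏ j, (Complex.exp (2 * (Real.pi : ℂ) * Complex.I * (r j : ℂ))) ^ (c j)
      = Complex.exp (2 * (Real.pi : ℂ) * Complex.I * ((∑ j, (c j : ℚ) * r j : ℚ) : ℂ)) := by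
  have h1 : ∀ j : Fin n,
      (Complex.exp (2 * (Real.pi : ℂ) * Complex.I * (r j : ℂ))) ^ (c j)
        = Complex.exp (2 * (Real.pi : ℂ) * Complex.I * (((c j : ℚ) * r j : ℚ) : ℂ)) := by
    intro j
    rw [← Complex.exp_int_mul]
    congr 1
    push_cast
    ring
  rw [Finset.prod_congr rfl (fun j _ => h1 j), ← Complex.exp_sum]
  congr 1
  push_cast
  rw [Finset.mul_sum]

/-- The exponential of `2πi` times a sum of rationals is the product of exponentials. -/
lemma exp_rat_sum {n : ℕ} (α : Fin n → ℚ) :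
    Complex.exp (2 * (Real.pi : ℂ) * Complex.I * ((∑ i, α i : ℚ) : ℂ))
      = ∏ j, Complex.exp (2 * (Real.pi : ℂ) * Complex.I * (α j : ℂ)) := by
  rw [← Complex.exp_sum]
  congr 1
  push_cast
  rw [Finset.mul_sum]


/-- Coercion of a product of units. -/
lemma units_val_prod {n : ℕ} (f : Fin n → ℂˣ) :
    ((∏ j, f j : ℂˣ) : ℂ) = ∏ j, ((f j : ℂˣ) : ℂ) :=
  map_prod (Units.coeHom ℂ) f Finset.univ

/-- For `λ ∈ G_{f̃}`, one has `⟨λ, g₀⟩_E = 1` iff `∏ j, λ j = 1`.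
Equivalently, the dual subgroup of `G_{f,0} = ⟨g₀⟩ ⊆ G_f` equals
`G_{f̃} ∩ SL(n, ℂ)` (viewing elements of `G_{f̃}` as diagonal matrices). -/
theorem stmt12 (n : ℕ) (E : Matrix (Fin n) (Fin n) ℤ) (hE : E.det ≠ 0)
    (q : Fin n → ℚ) (hq : ∀ i, ∑ j, (E i j : ℚ) * q j = 1) :
    (∀ lam : Fin n → ℂˣ, lam ∈ Gf Eᵀ → ∀ α : Fin n → ℚ,
      (∀ j, ((lam j : ℂˣ) : ℂ)
          = Complex.exp (2 * (Real.pi : ℂ) * Complex.I * (α j : ℂ))) →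
      (Complex.exp (2 * (Real.pi : ℂ) * Complex.I *
          ((∑ i, ∑ j, α i * (E i j : ℚ) * q j : ℚ) : ℂ)) = 1
        ↔ ∏ j, ((lam j : ℂˣ) : ℂ) = 1)) ∧
    {lam : Fin n → ℂˣ | lam ∈ Gf Eᵀ ∧
        ∀ mu : Fin n → ℂˣ, mu ∈ Gf E → (∃ m : ℤ, mu = fun j => gZero q j ^ m) →
          ∀ α β : Fin n → ℚ,
            (∀ j, ((lam j : ℂˣ) : ℂ)
                = Complex.exp (2 * (Real.pi : ℂ) * Complex.I * (α j : ℂ))) →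
            (∀ j, ((mu j : ℂˣ) : ℂ)
                = Complex.exp (2 * (Real.pi : ℂ) * Complex.I * (β j : ℂ))) →
            Complex.exp (2 * (Real.pi : ℂ) * Complex.I *
                ((∑ i, ∑ j, α i * (E i j : ℚ) * β j : ℚ) : ℂ)) = 1}
      = {lam : Fin n → ℂˣ | lam ∈ Gf Eᵀ ∧
          (Matrix.diagonal fun j => ((lam j : ℂˣ) : ℂ)).det = 1} := by

  -- the key rational identity: pairing exponent against q is the trace sum
  have key : ∀ α : Fin n → ℚ, (∑ i, ∑ j, α i * (E i j : ℚ) * q j) = ∑ i, α i := by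
    intro α
    refine Finset.sum_congr rfl fun i _ => ?_
    calc ∑ j, α i * (E i j : ℚ) * q j = α i * ∑ j, (E i j : ℚ) * q j := by
          rw [Finset.mul_sum]; exact Finset.sum_congr rfl fun j _ => by ring
      _ = α i := by rw [hq i, mul_one]
  -- part 1
  have part1 : ∀ lam : Fin n → ℂˣ, ∀ α : Fin n → ℚ,
      (∀ j, ((lam j : ℂˣ) : ℂ)
          = Complex.exp (2 * (Real.pi : ℂ) * Complex.I * (α j : ℂ))) →
      Complex.exp (2 * (Real.pi : ℂ) * Complex.I *
          ((∑ i, ∑ j, α i * (E i j : ℚ) * q j : ℚ) : ℂ))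
        = ∏ j, ((lam j : ℂˣ) : ℂ) := by
    intro lam α hα
    rw [key α, exp_rat_sum]
    exact Finset.prod_congr rfl fun j _ => (hα j).symm
  -- `g₀` belongs to `G_f`.
  have hg0 : gZero q ∈ Gf E := by
    intro i
    apply Units.ext
    rw [units_val_prod]
    have : ∀ j : Fin n, ((gZero q j ^ E i j : ℂˣ) : ℂ)
        = (Complex.exp (2 * (Real.pi : ℂ) * Complex.I * (q j : ℂ))) ^ (E i j) := by
      intro j
      rw [Units.val_zpow_eq_zpow_val]
      rfl
    rw [Finset.prod_congr rfl fun j _ => this j, prod_exp_zpow, hq i]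
    simp [Complex.exp_two_pi_mul_I]
  -- membership in `Gf Eᵀ` translated into integrality of exponent sums
  have hGint : ∀ lam : Fin n → ℂˣ, lam ∈ Gf Eᵀ → ∀ α : Fin n → ℚ,
      (∀ j, ((lam j : ℂˣ) : ℂ)
          = Complex.exp (2 * (Real.pi : ℂ) * Complex.I * (α j : ℂ))) →
      ∀ j, ∃ C : ℤ, (∑ i, (E i j : ℚ) * α i) = C := by
    intro lam hG α hα j
    have h1 : ((∏ i, lam i ^ Eᵀ j i : ℂˣ) : ℂ) = 1 := by rw [hG j]; rfl
    rw [units_val_prod] at h1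
    have h2 : ∀ i : Fin n, ((lam i ^ Eᵀ j i : ℂˣ) : ℂ)
        = (Complex.exp (2 * (Real.pi : ℂ) * Complex.I * (α i : ℂ))) ^ (E i j) := by
      intro i
      rw [Units.val_zpow_eq_zpow_val, hα i, Matrix.transpose_apply]
    rw [Finset.prod_congr rfl fun i _ => h2 i, prod_exp_zpow] at h1
    exact (exp_rat_eq_one_iff _).mp h1
  constructor
  · -- Part 1
    intro lam _ α hα
    rw [part1 lam α hα]
  · -- Part 2
    ext lam
    simp only [Set.mem_setOf_eq, Matrix.det_diagonal]
    constructor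
    · rintro ⟨hG, hall⟩
      refine ⟨hG, ?_⟩
      -- every coordinate of `lam` is a root of unity of order `|det E|`
      set d : ℕ := E.det.natAbs with hd
      have hdpos : 0 < d := Int.natAbs_pos.mpr hE
      haveI : NeZero d := ⟨hdpos.ne'⟩
      have hroot : ∀ k, lam k ∈ rootsOfUnity d ℂ := by
        intro k
        rw [_root_.mem_rootsOfUnity]
        have h1 : ∀ i, ∏ j, lam j ^ E j i = 1 := by
          intro i
          have := hG i
          simpa [Matrix.transpose_apply] using this
        have h2 : lam k ^ E.det = 1 := by
          have hprod : ∀ j : Fin n, lam j ^ ((E * E.adjugate) j k)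
              = ∏ i, (lam j ^ E j i) ^ E.adjugate i k := by
            intro j
            rw [Matrix.mul_apply, zpow_finset_sum]
            exact Finset.prod_congr rfl fun i _ => by rw [_root_.zpow_mul]
          have hL : ∏ j, lam j ^ ((E * E.adjugate) j k) = 1 := by
            rw [Finset.prod_congr rfl fun j _ => hprod j, Finset.prod_comm]
            refine Finset.prod_eq_one fun i _ => ?_
            rw [Finset.prod_zpow, h1 i, _root_.one_zpow]
          have hR : ∏ j, lam j ^ ((E * E.adjugate) j k) = lam k ^ E.det := by
            rw [Matrix.mul_adjugate]
            rw [Finset.prod_eq_single k]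
            · simp [Matrix.smul_apply, Matrix.one_apply]
            · intro j _ hj
              simp [Matrix.smul_apply, Matrix.one_apply, hj]
            · intro h; exact absurd (Finset.mem_univ k) h
          rw [← hR, hL]
        rcases Int.natAbs_eq E.det with h | h
        · have : lam k ^ ((d : ℤ)) = 1 := by rw [← h]; exact h2
          simpa [zpow_natCast] using this
        · have : lam k ^ (-(d : ℤ)) = 1 := by rw [← h]; exact h2
          rw [_root_.zpow_neg, inv_eq_one] at this
          simpa [zpow_natCast] using this
      choose ι hιlt hι using fun k => (Complex.mem_rootsOfUnity d (lam k)).mp (hroot k)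
      set α : Fin n → ℚ := fun k => (ι k : ℚ) / (d : ℚ) with hαdef
      have hα : ∀ j, ((lam j : ℂˣ) : ℂ)
          = Complex.exp (2 * (Real.pi : ℂ) * Complex.I * (α j : ℂ)) := by
        intro j
        rw [← hι j]
        congr 1
        rw [hαdef]
        push_cast
        ring
      have := hall (gZero q) hg0 ⟨1, by funext j; rw [zpow_one]⟩ α q hα (fun j => rfl)
      rw [part1 lam α hα] at this
      exact this
    · rintro ⟨hG, hdet⟩
      refine ⟨hG, ?_⟩
      rintro mu hmu ⟨m, rfl⟩ α β hα hβ
      -- integrality facts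
      choose C hC using hGint lam hG α hα
      obtain ⟨S, hS⟩ : ∃ S : ℤ, (∑ i, α i) = S := by
        apply (exp_rat_eq_one_iff _).mp
        rw [exp_rat_sum, Finset.prod_congr rfl fun j _ => (hα j).symm, hdet]
      have hKex : ∀ j, ∃ K : ℤ, β j = m * q j + K := by
        intro j
        have h1 : Complex.exp (2 * (Real.pi : ℂ) * Complex.I * (β j : ℂ))
            = Complex.exp (2 * (Real.pi : ℂ) * Complex.I * ((m * q j : ℚ) : ℂ)) := by
          rw [← hβ j]
          have : ((gZero q j ^ m : ℂˣ) : ℂ)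
              = (Complex.exp (2 * (Real.pi : ℂ) * Complex.I * (q j : ℂ))) ^ m := by
            rw [Units.val_zpow_eq_zpow_val]; rfl
          rw [this, ← Complex.exp_int_mul]
          congr 1
          push_cast
          ring
        have h2 : Complex.exp (2 * (Real.pi : ℂ) * Complex.I
            * ((β j - m * q j : ℚ) : ℂ)) = 1 := by
          have : (((β j - m * q j : ℚ)) : ℂ) = (β j : ℂ) - ((m * q j : ℚ) : ℂ) := by
            push_cast; ring
          rw [this, mul_sub, Complex.exp_sub, h1, div_self (Complex.exp_ne_zero _)]
        obtain ⟨K, hK⟩ := (exp_rat_eq_one_iff _).mp h2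
        exact ⟨K, by linarith⟩
      choose K hK using hKex
      -- conclude
      rw [exp_rat_eq_one_iff]
      refine ⟨m * S + ∑ j, C j * K j, ?_⟩
      have hCq : ∑ j, (C j : ℚ) * q j = ∑ i, α i := by
        calc ∑ j, (C j : ℚ) * q j = ∑ j, (∑ i, (E i j : ℚ) * α i) * q j :=
              Finset.sum_congr rfl fun j _ => by rw [hC j]
          _ = ∑ j, ∑ i, α i * (E i j : ℚ) * q j := Finset.sum_congr rfl fun j _ => by
              rw [Finset.sum_mul]; exact Finset.sum_congr rfl fun i _ => by ring
          _ = ∑ i, ∑ j, α i * (E i j : ℚ) * q j := Finset.sum_comm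
          _ = ∑ i, α i := key α
      calc ∑ i, ∑ j, α i * (E i j : ℚ) * β j
          = ∑ j, ∑ i, α i * (E i j : ℚ) * β j := Finset.sum_comm
        _ = ∑ j, (∑ i, (E i j : ℚ) * α i) * β j := Finset.sum_congr rfl fun j _ => by
            rw [Finset.sum_mul]; exact Finset.sum_congr rfl fun i _ => by ring
        _ = ∑ j, (C j : ℚ) * ((m : ℚ) * q j + (K j : ℚ)) :=
            Finset.sum_congr rfl fun j _ => by rw [hC j, hK j]
        _ = ∑ j, ((m : ℚ) * ((C j : ℚ) * q j) + (C j : ℚ) * (K j : ℚ)) :=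
            Finset.sum_congr rfl fun j _ => by ring
        _ = (m : ℚ) * (∑ j, (C j : ℚ) * q j) + ∑ j, (C j : ℚ) * (K j : ℚ) := by
            rw [Finset.sum_add_distrib, Finset.mul_sum]
        _ = ((m * S + ∑ j, C j * K j : ℤ) : ℚ) := by
            rw [hCq, hS]
            push_cast
            ring

end
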